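/- Let q : R^n → {1,...,k} be a measurable quantizer, X a random vector in R^n, and η(X) = E[Y|X] the regression function of a square-integrable Y. Define f_q(j) = E[Y | q(X) = j] and codebook C = {f_q(1),...,f_q(k)}. Then E||E[Y|X] - E[Y|q(X)]||^2 ≥ E[min_{j∈[k]} ||η(X) - f_q(j)||^2] = E||η(X) - q_C(η(X))||^2 evaluated with the nearest-neighbor quantizer q_C — in particular, E||E[Y|X] - E[Y|q(X)]||² ≥ inf over codebooks C' ⊂ R^p, |C'| = k, of E||η(X) - q_{C'}(η(X))||². -/

import Mathlib

open MeasureTheory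


/-- Conditional expectation of an `L²` function is `L²` (finite measure case),
proved via `condExpL2`. -/
lemma memℒp_two_condexp_aux {α E : Type*} {m m0 : MeasurableSpace α} (hm : m ≤ m0)
    {μ : Measure α} [IsFiniteMeasure μ] [NormedAddCommGroup E] [InnerProductSpace ℝ E]
    [CompleteSpace E] {f : α → E} (hf : MemLp f 2 μ) : MemLp (μ[f|m]) 2 μ := by
  have hg : MemLp (condExpL2 E ℝ hm (hf.toLp f) : α → E) 2 μ := Lp.memLp _
  refine hg.ae_eq ?_
  refine ae_eq_condExp_of_forall_setIntegral_eq hm (hf.integrable one_le_two)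
    (fun s hs hμs => integrableOn_condExpL2_of_measure_ne_top hm hμs.ne _)
    (fun s hs hμs => ?_) (aestronglyMeasurable_condExpL2 hm _)
  rw [integral_condExpL2_eq hm _ hs hμs.ne]
  exact setIntegral_congr_ae (hm s hs) ((hf.coeFn_toLp).mono fun x hx _ => hx)

/-- Converse half of the Ephraim–Gray reduction: for any measurable quantizer
`q` of `X`, with `f_q j = E[Y | q(X) = j]` (the conditional mean on each cell)
and `η(X) = E[Y|X]`, one has
`E‖E[Y|X] - E[Y|q(X)]‖² ≥ E[min_j ‖η(X) - f_q j‖²]`, and in particular the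
left-hand side dominates the infimum over all size-`k` codebooks of the
expected squared distance from `η(X)` to the nearest codepoint. -/
theorem stmt18 {Ω : Type*} [MeasurableSpace Ω] (μ : Measure Ω) [IsProbabilityMeasure μ]
    {n p k : ℕ} (hk : 0 < k)
    (X : Ω → EuclideanSpace ℝ (Fin n)) (Y : Ω → EuclideanSpace ℝ (Fin p))
    (hX : Measurable X) (hY : Measurable Y) (hY2 : MemLp Y 2 μ)
    (q : EuclideanSpace ℝ (Fin n) → Fin k) (hq : Measurable q)
    (η : Ω → EuclideanSpace ℝ (Fin p))
    (hη : η = μ[Y | MeasurableSpace.comap X inferInstance])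
    (fq : Fin k → EuclideanSpace ℝ (Fin p))
    (hfq : ∀ j, fq j = ((μ {ω | q (X ω) = j}).toReal)⁻¹ •
        ∫ ω in {ω | q (X ω) = j}, Y ω ∂μ) :
    (∫ ω, ‖η ω - (μ[Y | MeasurableSpace.comap (fun ω => q (X ω)) inferInstance]) ω‖ ^ 2 ∂μ
        ≥ ∫ ω, ⨅ j : Fin k, ‖η ω - fq j‖ ^ 2 ∂μ)
    ∧ ∫ ω, ‖η ω - (μ[Y | MeasurableSpace.comap (fun ω => q (X ω)) inferInstance]) ω‖ ^ 2 ∂μ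
        ≥ ⨅ C : {C : Finset (EuclideanSpace ℝ (Fin p)) // C.card = k},
            ∫ ω, ⨅ c : C.1, ‖η ω - (c : EuclideanSpace ℝ (Fin p))‖ ^ 2 ∂μ := by
  classical
  haveI : Nonempty (Fin k) := ⟨⟨0, hk⟩⟩
  have hqX : Measurable (fun ω => q (X ω)) := hq.comp hX
  have hm := hqX.comap_le
  set g : Ω → EuclideanSpace ℝ (Fin p) := fun ω => fq (q (X ω)) with hgdef
  -- measurability of g with respect to m
  have hgm : Measurable[MeasurableSpace.comap (fun ω => q (X ω)) inferInstance] g := by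
    have h1 : Measurable[MeasurableSpace.comap (fun ω => q (X ω)) inferInstance]
        (fun ω => q (X ω)) := Measurable.of_comap_le le_rfl
    exact (Measurable.of_discrete (f := fq)).comp h1
  have hgm0 : Measurable g := hgm.le hm
  -- g is bounded, hence in L² and integrable
  have hgbound : ∀ ω, ‖g ω‖ ≤ ∑ j : Fin k, ‖fq j‖ := fun ω =>
    Finset.single_le_sum (f := fun j => ‖fq j‖) (fun j _ => norm_nonneg _) (Finset.mem_univ _)
  have hg2 : MemLp g 2 μ :=
    MemLp.of_bound hgm0.stronglyMeasurable.aestronglyMeasurable _ (ae_of_all _ hgbound)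
  have hgint : Integrable g μ := hg2.integrable one_le_two
  have hYint : Integrable Y μ := hY2.integrable one_le_two
  -- atoms
  have hAmeas : ∀ j : Fin k, MeasurableSet {ω | q (X ω) = j} := fun j =>
    hqX (measurableSet_singleton j)
  -- per-atom integral identity
  have key : ∀ j : Fin k,
      ∫ ω in {ω | q (X ω) = j}, g ω ∂μ = ∫ ω in {ω | q (X ω) = j}, Y ω ∂μ := by
    intro j
    have hconst : ∫ ω in {ω | q (X ω) = j}, g ω ∂μ
        = (μ {ω | q (X ω) = j}).toReal • fq j := by
      rw [setIntegral_congr_fun (hAmeas j) (g := fun _ => fq j)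
        (fun ω hω => by simp only [hgdef]; rw [hω])]
      exact setIntegral_const _
    rcases eq_or_ne (μ {ω | q (X ω) = j}) 0 with h0 | h0
    · rw [hconst, h0, Measure.restrict_eq_zero.2 h0]
      simp
    · have hfin : (μ {ω | q (X ω) = j}).toReal ≠ 0 :=
        ENNReal.toReal_ne_zero.2 ⟨h0, measure_ne_top _ _⟩
      rw [hconst, hfq j, smul_smul, mul_inv_cancel₀ hfin, one_smul]
  -- g is (a version of) the conditional expectation
  have hcond : g =ᵐ[μ] μ[Y|MeasurableSpace.comap (fun ω => q (X ω)) inferInstance] := by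
    refine ae_eq_condExp_of_forall_setIntegral_eq hm hYint
      (fun s _ _ => hgint.integrableOn) (fun s hs _ => ?_)
      (hgm.stronglyMeasurable.aestronglyMeasurable)
    obtain ⟨S, -, rfl⟩ := hs
    have hdecomp : (fun ω => q (X ω)) ⁻¹' S
        = ⋃ j : Fin k, ((fun ω => q (X ω)) ⁻¹' (S ∩ {j})) := by
      rw [← Set.preimage_iUnion]
      congr 1
      ext x
      simp
    have hmeas' : ∀ j : Fin k, MeasurableSet ((fun ω => q (X ω)) ⁻¹' (S ∩ {j})) :=
      fun j => hqX trivial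
    have hdisj : Pairwise (Function.onFun Disjoint fun j : Fin k => (fun ω => q (X ω)) ⁻¹' (S ∩ {j})) := by
      intro i j hij
      refine Set.disjoint_left.2 fun ω hi hj => hij ?_
      have h1 : q (X ω) = i := hi.2
      have h2 : q (X ω) = j := hj.2
      rw [← h1, h2]
    rw [hdecomp,
      integral_iUnion_fintype hmeas' hdisj (fun j => hgint.integrableOn),
      integral_iUnion_fintype hmeas' hdisj (fun j => hYint.integrableOn)]
    refine Finset.sum_congr rfl fun j _ => ?_
    by_cases hj : j ∈ S
    · have : S ∩ {j} = {j} := Set.inter_eq_right.2 (by simpa using hj)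
      rw [this]
      exact key j
    · have : S ∩ ({j} : Set (Fin k)) = ∅ := by
        ext x; simp only [Set.mem_inter_iff, Set.mem_singleton_iff, Set.mem_empty_iff_false,
          iff_false]
        rintro ⟨hx, rfl⟩; exact hj hx
      rw [this]
      simp
  have hce : (μ[Y|MeasurableSpace.comap (fun ω => q (X ω)) inferInstance]) =ᵐ[μ] g := hcond.symm
  -- properties of η
  have hη2 : MemLp η 2 μ := by
    rw [hη]; exact memℒp_two_condexp_aux hX.comap_le hY2
  have hηmeas : Measurable η := by
    rw [hη]; exact (stronglyMeasurable_condExp.mono hX.comap_le).measurable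
  -- the main integrand
  set F : Ω → ℝ := fun ω => ‖η ω - g ω‖ ^ 2 with hFdef
  have hFint : Integrable F μ := by
    have h := (hη2.sub hg2).integrable_norm_rpow two_ne_zero ENNReal.ofNat_ne_top
    simpa [hFdef, ENNReal.toReal_ofNat, Real.rpow_natCast] using h
  -- rewrite the LHS
  have hLHS : ∫ ω, ‖η ω - (μ[Y|MeasurableSpace.comap (fun ω => q (X ω)) inferInstance]) ω‖ ^ 2 ∂μ = ∫ ω, F ω ∂μ := by
    refine integral_congr_ae (hce.mono fun ω h => ?_)
    simp only [hFdef, h]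
  -- infimum over codepoints
  set B : Ω → ℝ := fun ω => ⨅ j : Fin k, ‖η ω - fq j‖ ^ 2 with hBdef
  have hBdd : ∀ ω, BddBelow (Set.range fun j : Fin k => ‖η ω - fq j‖ ^ 2) := fun ω =>
    ⟨0, by rintro x ⟨j, rfl⟩; positivity⟩
  have hBleF : ∀ ω, B ω ≤ F ω := fun ω => ciInf_le (hBdd ω) (q (X ω))
  have hBnonneg : ∀ ω, 0 ≤ B ω := fun ω => Real.iInf_nonneg fun j => by positivity
  have hBmeas : Measurable B := by
    refine Measurable.iInf fun j => ?_
    exact ((hηmeas.sub measurable_const).norm.pow measurable_const)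
  have hBint : Integrable B μ := by
    refine Integrable.mono hFint hBmeas.stronglyMeasurable.aestronglyMeasurable
      (ae_of_all _ fun ω => ?_)
    rw [Real.norm_of_nonneg (hBnonneg ω), Real.norm_of_nonneg (by positivity)]
    exact hBleF ω
  have part1 : ∫ ω, B ω ∂μ ≤ ∫ ω, F ω ∂μ :=
    integral_mono hBint hFint hBleF
  constructor
  · rw [hLHS]; exact part1
  · -- second part
    rcases isEmpty_or_nonempty {C : Finset (EuclideanSpace ℝ (Fin p)) // C.card = k} with hE | hE
    · rw [Real.iInf_of_isEmpty]
      exact integral_nonneg fun ω => by positivity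
    · obtain ⟨C₀, hC₀⟩ := hE.some
      set img : Finset (EuclideanSpace ℝ (Fin p)) := Finset.image fq Finset.univ with himgdef
      have h1 : img ⊆ img ∪ C₀ := Finset.subset_union_left
      have h2 : img.card ≤ k := le_trans (Finset.card_image_le) (by simp)
      have h3 : k ≤ (img ∪ C₀).card := hC₀ ▸ Finset.card_le_card Finset.subset_union_right
      obtain ⟨u, hu1, -, hu3⟩ := Finset.exists_subsuperset_card_eq h1 h2 h3
      have hmemu : ∀ j : Fin k, fq j ∈ u := fun j =>
        hu1 (Finset.mem_image_of_mem fq (Finset.mem_univ j))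
      have hune : Nonempty u := ⟨⟨fq ⟨0, hk⟩, hmemu ⟨0, hk⟩⟩⟩
      set G : Ω → ℝ := fun ω => ⨅ c : u, ‖η ω - (c : EuclideanSpace ℝ (Fin p))‖ ^ 2 with hGdef
      have hGdd : ∀ ω, BddBelow (Set.range fun c : u => ‖η ω - (c : EuclideanSpace ℝ (Fin p))‖ ^ 2) := fun ω =>
        ⟨0, by rintro x ⟨c, rfl⟩; positivity⟩
      have hGleB : ∀ ω, G ω ≤ B ω := fun ω =>
        le_ciInf fun j => ciInf_le (hGdd ω) ⟨fq j, hmemu j⟩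
      have hGnonneg : ∀ ω, 0 ≤ G ω := fun ω => Real.iInf_nonneg fun c => by positivity
      have hGmeas : Measurable G := by
        refine Measurable.iInf fun c => ?_
        exact ((hηmeas.sub measurable_const).norm.pow measurable_const)
      have hGint : Integrable G μ := by
        refine Integrable.mono hBint hGmeas.stronglyMeasurable.aestronglyMeasurable
          (ae_of_all _ fun ω => ?_)
        rw [Real.norm_of_nonneg (hGnonneg ω), Real.norm_of_nonneg (hBnonneg ω)]
        exact hGleB ω
      have hGB : ∫ ω, G ω ∂μ ≤ ∫ ω, B ω ∂μ := integral_mono hGint hBint hGleB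
      have hbdd : BddBelow (Set.range fun C : {C : Finset (EuclideanSpace ℝ (Fin p)) // C.card = k} =>
          ∫ ω, ⨅ c : C.1, ‖η ω - (c : EuclideanSpace ℝ (Fin p))‖ ^ 2 ∂μ) := by
        refine ⟨0, ?_⟩
        rintro x ⟨C, rfl⟩
        exact integral_nonneg fun ω => Real.iInf_nonneg fun c => by positivity
      calc (⨅ C : {C : Finset (EuclideanSpace ℝ (Fin p)) // C.card = k},
              ∫ ω, ⨅ c : C.1, ‖η ω - (c : EuclideanSpace ℝ (Fin p))‖ ^ 2 ∂μ)
          ≤ ∫ ω, G ω ∂μ := ciInf_le hbdd ⟨u, hu3⟩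
        _ ≤ ∫ ω, B ω ∂μ := hGB
        _ ≤ ∫ ω, F ω ∂μ := part1
        _ = _ := hLHS.symm
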